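/- arXiv:2302.04685 — 2 statements merged into one kernel-verified Lean document; each statement's English description precedes it below -/
import Mathlib

section
/- In a resource category, for any finite multiset f of pointed morphisms A → B, the composite δ_B ∘ Πf equals the sum over all splittings f = f1 * f2 (over 2-partitionings of an enumeration of f) of (Πf1 ⊗ Πf2) ∘ δ_A, where Πf denotes the convolution product of the elements of f. -/
open CategoryTheory MonoidalCategory

universe v u

/-- An additive symmetric monoidal category: each hom-set is a commutative monoid and
composition and tensor preserve the additive structure. -/
class ASMC (C : Type u) [Category.{v} C] [MonoidalCategory C] where
  homMon : ∀ X Y : C, AddCommMonoid (X ⟶ Y)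
  comp_add : ∀ {X Y Z : C} (f : X ⟶ Y) (g h : Y ⟶ Z), f ≫ (g + h) = f ≫ g + f ≫ h
  add_comp : ∀ {X Y Z : C} (f g : X ⟶ Y) (h : Y ⟶ Z), (f + g) ≫ h = f ≫ h + g ≫ h
  comp_zero : ∀ {X Y Z : C} (f : X ⟶ Y), f ≫ (0 : Y ⟶ Z) = 0
  zero_comp : ∀ {X Y Z : C} (g : Y ⟶ Z), (0 : X ⟶ Y) ≫ g = 0
  add_tensorHom : ∀ {X Y Z W : C} (f g : X ⟶ Y) (h : Z ⟶ W),
    (f + g) ⊗ₘ h = f ⊗ₘ h + g ⊗ₘ h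
  tensorHom_add : ∀ {X Y Z W : C} (f : X ⟶ Y) (g h : Z ⟶ W),
    f ⊗ₘ (g + h) = f ⊗ₘ g + f ⊗ₘ h
  zero_tensorHom : ∀ {X Y Z W : C} (h : Z ⟶ W), (0 : X ⟶ Y) ⊗ₘ h = 0
  tensorHom_zero : ∀ {X Y Z W : C} (f : X ⟶ Y), f ⊗ₘ (0 : Z ⟶ W) = 0

attribute [instance] ASMC.homMon

variable (C : Type u) [Category.{v} C] [MonoidalCategory C] [SymmetricCategory C]

/-- The middle-four interchange `(A ⊗ B) ⊗ (A' ⊗ B') ≅ (A ⊗ A') ⊗ (B ⊗ B')`. -/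
def mid (A B A' B' : C) : (A ⊗ B) ⊗ (A' ⊗ B') ⟶ (A ⊗ A') ⊗ (B ⊗ B') :=
  (α_ A B (A' ⊗ B')).hom ≫
    (A ◁ ((α_ B A' B').inv ≫ ((β_ B A').hom ▷ B') ≫ (α_ A' B B').hom)) ≫
    (α_ A A' (B ⊗ B')).inv

variable [ASMC C]

/-- A (commutative) bialgebra structure on every object, compatible with the monoidal
structure. -/
structure BialgStruct where
  δ : ∀ A : C, A ⟶ A ⊗ A
  ε : ∀ A : C, A ⟶ 𝟙_ C
  μ : ∀ A : C, A ⊗ A ⟶ A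
  η : ∀ A : C, 𝟙_ C ⟶ A
  coassoc : ∀ A, δ A ≫ (δ A ▷ A) ≫ (α_ A A A).hom = δ A ≫ (A ◁ δ A)
  counit_l : ∀ A, δ A ≫ (ε A ▷ A) = (λ_ A).inv
  counit_r : ∀ A, δ A ≫ (A ◁ ε A) = (ρ_ A).inv
  cocomm : ∀ A, δ A ≫ (β_ A A).hom = δ A
  assoc : ∀ A, (α_ A A A).hom ≫ (A ◁ μ A) ≫ μ A = (μ A ▷ A) ≫ μ A
  unit_l : ∀ A, (η A ▷ A) ≫ μ A = (λ_ A).hom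
  unit_r : ∀ A, (A ◁ η A) ≫ μ A = (ρ_ A).hom
  comm : ∀ A, (β_ A A).hom ≫ μ A = μ A
  bialg : ∀ A, μ A ≫ δ A = (δ A ⊗ₘ δ A) ≫ mid C A A A A ≫ (μ A ⊗ₘ μ A)
  η_δ : ∀ A, η A ≫ δ A = (λ_ (𝟙_ C)).inv ≫ (η A ⊗ₘ η A)
  μ_ε : ∀ A, μ A ≫ ε A = (ε A ⊗ₘ ε A) ≫ (λ_ (𝟙_ C)).hom
  η_ε : ∀ A, η A ≫ ε A = 𝟙 (𝟙_ C)
  δ_tensor : ∀ A B, δ (A ⊗ B) = (δ A ⊗ₘ δ B) ≫ mid C A A B B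
  ε_tensor : ∀ A B, ε (A ⊗ B) = (ε A ⊗ₘ ε B) ≫ (λ_ (𝟙_ C)).hom
  ε_unit : ε (𝟙_ C) = 𝟙 (𝟙_ C)
  μ_tensor : ∀ A B, μ (A ⊗ B) = mid C A B A B ≫ (μ A ⊗ₘ μ B)
  η_tensor : ∀ A B, η (A ⊗ B) = (λ_ (𝟙_ C)).inv ≫ (η A ⊗ₘ η B)
  η_unit : η (𝟙_ C) = 𝟙 (𝟙_ C)

/-- A resource category structure: a bialgebra on every object together with pointed
identities satisfying the laws of pointed identities. -/
structure ResourceStruct extends BialgStruct C where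
  pid : ∀ A : C, A ⟶ A
  pid_idem : ∀ A, pid A ≫ pid A = pid A
  pid_ε : ∀ A, pid A ≫ ε A = 0
  η_pid : ∀ A, η A ≫ pid A = 0
  pid_δ : ∀ A, pid A ≫ δ A =
    pid A ≫ (ρ_ A).inv ≫ (A ◁ η A) + pid A ≫ (λ_ A).inv ≫ (η A ▷ A)
  μ_pid : ∀ A, μ A ≫ pid A =
    (A ◁ ε A) ≫ (ρ_ A).hom ≫ pid A + (ε A ▷ A) ≫ (λ_ A).hom ≫ pid A

variable {C}

/-- The convolution product `f * g = μ ∘ (f ⊗ g) ∘ δ`. -/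
def conv (R : BialgStruct C) {A B : C} (f g : A ⟶ B) : A ⟶ B :=
  R.δ A ≫ (f ⊗ₘ g) ≫ R.μ B

/-- The convolution unit `1 = η ∘ ε`. -/
def convOne (R : BialgStruct C) (A B : C) : A ⟶ B := R.ε A ≫ R.η B

/-- The product `Π[f₁,…,fₙ] = f₁ * ⋯ * fₙ` of a bag (enumerated as a list) of
morphisms, with `Π[] = 1`. -/
def prodL (R : BialgStruct C) {A B : C} (l : List (A ⟶ B)) : A ⟶ B :=
  l.foldr (conv R) (convOne R A B)

/-- A morphism is pointed when `id• ∘ f = f`. -/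
def IsPointedHom (R : ResourceStruct C) {A B : C} (f : A ⟶ B) : Prop := f ≫ R.pid B = f

/-- The sublist of `l` selected by the positions the 2-partitioning `p` sends to `i`. -/
def selH {A B : C} (l : List (A ⟶ B)) (p : Fin l.length → Fin 2) (i : Fin 2) :
    List (A ⟶ B) :=
  ((List.finRange l.length).filter (fun j => p j = i)).map l.get

section Aux
variable {C : Type u} [Category.{v} C] [MonoidalCategory C] [SymmetricCategory C] [ASMC C]

lemma mid_eq_tensorμ (A B A' B' : C) : mid C A B A' B' = tensorμ A B A' B' := by
  simp [mid, tensorμ, MonoidalCategory.whiskerLeft_comp]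

lemma mid_natural {A B A' B' X Y X' Y' : C} (a : A ⟶ X) (b : B ⟶ Y) (c : A' ⟶ X') (d : B' ⟶ Y') :
    ((a ⊗ₘ b) ⊗ₘ (c ⊗ₘ d)) ≫ mid C X Y X' Y' = mid C A B A' B' ≫ ((a ⊗ₘ c) ⊗ₘ (b ⊗ₘ d)) := by
  rw [mid_eq_tensorμ, mid_eq_tensorμ]; exact tensorμ_natural a b c d

lemma delta4 (R : BialgStruct C) (A : C) :
    R.δ A ≫ (R.δ A ⊗ₘ R.δ A) ≫ mid C A A A A = R.δ A ≫ (R.δ A ⊗ₘ R.δ A) := by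
  have h1 : R.δ A ≫ (R.δ A ⊗ₘ R.δ A) ≫ (α_ A A (A ⊗ A)).hom
      = R.δ A ≫ (A ◁ (R.δ A ≫ (A ◁ R.δ A))) := by
    rw [MonoidalCategory.tensorHom_def, MonoidalCategory.whiskerLeft_comp]
    slice_lhs 3 4 => rw [associator_naturality_right]
    slice_lhs 1 3 => rw [R.coassoc A]
    simp [Category.assoc]
  have h2 : R.δ A ≫ (A ◁ R.δ A) ≫ ((α_ A A A).inv ≫ ((β_ A A).hom ▷ A) ≫ (α_ A A A).hom)
      = R.δ A ≫ (A ◁ R.δ A) := by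
    have hc : R.δ A ≫ (A ◁ R.δ A) ≫ (α_ A A A).inv = R.δ A ≫ (R.δ A ▷ A) := by
      rw [← cancel_mono (α_ A A A).hom]
      simp only [Category.assoc, Iso.inv_hom_id, Category.comp_id]
      exact (R.coassoc A).symm
    calc R.δ A ≫ (A ◁ R.δ A) ≫ ((α_ A A A).inv ≫ ((β_ A A).hom ▷ A) ≫ (α_ A A A).hom)
        = (R.δ A ≫ (A ◁ R.δ A) ≫ (α_ A A A).inv) ≫ ((β_ A A).hom ▷ A) ≫ (α_ A A A).hom := by
          simp [Category.assoc]
      _ = R.δ A ≫ ((R.δ A ≫ (β_ A A).hom) ▷ A) ≫ (α_ A A A).hom := by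
          rw [hc]; simp [comp_whiskerRight, Category.assoc]
      _ = R.δ A ≫ (R.δ A ▷ A) ≫ (α_ A A A).hom := by rw [R.cocomm A]
      _ = R.δ A ≫ (A ◁ R.δ A) := R.coassoc A
  calc R.δ A ≫ (R.δ A ⊗ₘ R.δ A) ≫ mid C A A A A
      = (R.δ A ≫ (R.δ A ⊗ₘ R.δ A) ≫ (α_ A A (A ⊗ A)).hom)
          ≫ (A ◁ ((α_ A A A).inv ≫ ((β_ A A).hom ▷ A) ≫ (α_ A A A).hom))
          ≫ (α_ A A (A ⊗ A)).inv := by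
        simp [mid, Category.assoc]
    _ = R.δ A ≫ (A ◁ ((R.δ A ≫ (A ◁ R.δ A)) ≫ ((α_ A A A).inv ≫ ((β_ A A).hom ▷ A) ≫ (α_ A A A).hom)))
          ≫ (α_ A A (A ⊗ A)).inv := by
        rw [h1]; simp [MonoidalCategory.whiskerLeft_comp, Category.assoc]
    _ = R.δ A ≫ (A ◁ (R.δ A ≫ (A ◁ R.δ A))) ≫ (α_ A A (A ⊗ A)).inv := by
        rw [Category.assoc, h2]
    _ = R.δ A ≫ (R.δ A ⊗ₘ R.δ A) := by
        rw [← Category.assoc, ← h1]; simp [Category.assoc]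

end Aux

section Aux2
variable {C : Type u} [Category.{v} C] [MonoidalCategory C] [SymmetricCategory C] [ASMC C]

lemma tensor_one_right' (R : BialgStruct C) {A B : C} (x : A ⟶ B) :
    x ⊗ₘ (R.ε A ≫ R.η B) = (A ◁ R.ε A) ≫ (x ▷ (𝟙_ C)) ≫ (B ◁ R.η B) := by
  calc x ⊗ₘ (R.ε A ≫ R.η B) = A ◁ R.ε A ≫ (A ◁ R.η B ≫ x ▷ B) := by
        simp [tensorHom_def']
    _ = A ◁ R.ε A ≫ (x ▷ 𝟙_ C ≫ B ◁ R.η B) := by rw [whisker_exchange]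
    _ = _ := by simp [Category.assoc]

lemma conv_one_left (R : BialgStruct C) {A B : C} (x : A ⟶ B) : conv R (convOne R A B) x = x := by
  unfold conv convOne
  have h : (R.ε A ≫ R.η B) ⊗ₘ x = (R.ε A ▷ A) ≫ ((𝟙_ C) ◁ x) ≫ (R.η B ▷ B) := by
    simp [MonoidalCategory.tensorHom_def, ← whisker_exchange]
  rw [h]
  slice_lhs 1 2 => rw [R.counit_l A]
  slice_lhs 3 4 => rw [R.unit_l B]
  simp

lemma conv_one_right (R : BialgStruct C) {A B : C} (x : A ⟶ B) : conv R x (convOne R A B) = x := by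
  unfold conv convOne
  have h := tensor_one_right' R x
  rw [h]
  slice_lhs 1 2 => rw [R.counit_r A]
  slice_lhs 3 4 => rw [R.unit_r B]
  simp

lemma one_comp_delta (R : BialgStruct C) (A B : C) :
    convOne R A B ≫ R.δ B = R.δ A ≫ (convOne R A B ⊗ₘ convOne R A B) := by
  unfold convOne
  have h2 : R.δ A ≫ (R.ε A ⊗ₘ R.ε A) = R.ε A ≫ (λ_ (𝟙_ C)).inv := by
    rw [MonoidalCategory.tensorHom_def]
    slice_lhs 1 2 => rw [R.counit_l A]
    simp
  calc (R.ε A ≫ R.η B) ≫ R.δ B = R.ε A ≫ ((λ_ (𝟙_ C)).inv ≫ (R.η B ⊗ₘ R.η B)) := by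
        rw [Category.assoc, R.η_δ B]
    _ = (R.δ A ≫ (R.ε A ⊗ₘ R.ε A)) ≫ (R.η B ⊗ₘ R.η B) := by rw [h2]; simp [Category.assoc]
    _ = R.δ A ≫ ((R.ε A ≫ R.η B) ⊗ₘ (R.ε A ≫ R.η B)) := by
        rw [Category.assoc, tensorHom_comp_tensorHom]

lemma pointed_comp_delta (R : ResourceStruct C) {A B : C} (f : A ⟶ B) (hf : IsPointedHom R f) :
    f ≫ R.δ B = R.δ A ≫ (f ⊗ₘ convOne R.toBialgStruct A B)
      + R.δ A ≫ (convOne R.toBialgStruct A B ⊗ₘ f) := by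
  have h1 : R.δ A ≫ (f ⊗ₘ convOne R.toBialgStruct A B) = f ≫ (ρ_ B).inv ≫ (B ◁ R.η B) := by
    unfold convOne
    have h := tensor_one_right' R.toBialgStruct f
    rw [h]
    slice_lhs 1 2 => rw [R.counit_r A]
    simp
  have h2 : R.δ A ≫ (convOne R.toBialgStruct A B ⊗ₘ f) = f ≫ (λ_ B).inv ≫ (R.η B ▷ B) := by
    unfold convOne
    have h : (R.ε A ≫ R.η B) ⊗ₘ f = (R.ε A ▷ A) ≫ ((𝟙_ C) ◁ f) ≫ (R.η B ▷ B) := by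
      simp [MonoidalCategory.tensorHom_def, ← whisker_exchange]
    rw [h]
    slice_lhs 1 2 => rw [R.counit_l A]
    simp
  calc f ≫ R.δ B = f ≫ (R.pid B ≫ R.δ B) := by rw [← Category.assoc, hf]
    _ = f ≫ (R.pid B ≫ (ρ_ B).inv ≫ (B ◁ R.η B) + R.pid B ≫ (λ_ B).inv ≫ (R.η B ▷ B)) := by
        rw [R.pid_δ B]
    _ = (f ≫ R.pid B) ≫ ((ρ_ B).inv ≫ (B ◁ R.η B)) + (f ≫ R.pid B) ≫ ((λ_ B).inv ≫ (R.η B ▷ B)) := by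
        rw [ASMC.comp_add]; simp [Category.assoc]
    _ = _ := by rw [hf, h1, h2]

end Aux2

section Aux3
variable {C : Type u} [Category.{v} C] [MonoidalCategory C] [SymmetricCategory C] [ASMC C]

lemma conv_comp_delta (R : BialgStruct C) {A B : C} (f g : A ⟶ B) :
    conv R f g ≫ R.δ B
      = R.δ A ≫ ((f ≫ R.δ B) ⊗ₘ (g ≫ R.δ B)) ≫ mid C B B B B ≫ (R.μ B ⊗ₘ R.μ B) := by
  unfold conv
  rw [← tensorHom_comp_tensorHom]
  calc (R.δ A ≫ (f ⊗ₘ g) ≫ R.μ B) ≫ R.δ B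
      = R.δ A ≫ (f ⊗ₘ g) ≫ (R.μ B ≫ R.δ B) := by simp [Category.assoc]
    _ = R.δ A ≫ (f ⊗ₘ g) ≫ (R.δ B ⊗ₘ R.δ B) ≫ mid C B B B B ≫ (R.μ B ⊗ₘ R.μ B) := by
        rw [R.bialg B]
    _ = _ := by rw [Category.assoc]

lemma conv_term (R : BialgStruct C) {A B : C} (a b c d : A ⟶ B) :
    R.δ A ≫ ((R.δ A ≫ (a ⊗ₘ b)) ⊗ₘ (R.δ A ≫ (c ⊗ₘ d))) ≫ mid C B B B B ≫ (R.μ B ⊗ₘ R.μ B)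
      = R.δ A ≫ (conv R a c ⊗ₘ conv R b d) := by
  rw [← tensorHom_comp_tensorHom]
  calc R.δ A ≫ ((R.δ A ⊗ₘ R.δ A) ≫ ((a ⊗ₘ b) ⊗ₘ (c ⊗ₘ d))) ≫ mid C B B B B ≫ (R.μ B ⊗ₘ R.μ B)
      = R.δ A ≫ (R.δ A ⊗ₘ R.δ A) ≫ (((a ⊗ₘ b) ⊗ₘ (c ⊗ₘ d)) ≫ mid C B B B B) ≫ (R.μ B ⊗ₘ R.μ B) := by
        simp [Category.assoc]
    _ = R.δ A ≫ (R.δ A ⊗ₘ R.δ A) ≫ (mid C A A A A ≫ ((a ⊗ₘ c) ⊗ₘ (b ⊗ₘ d))) ≫ (R.μ B ⊗ₘ R.μ B) := by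
        rw [mid_natural]
    _ = (R.δ A ≫ (R.δ A ⊗ₘ R.δ A) ≫ mid C A A A A) ≫ ((a ⊗ₘ c) ⊗ₘ (b ⊗ₘ d)) ≫ (R.μ B ⊗ₘ R.μ B) := by
        simp [Category.assoc]
    _ = R.δ A ≫ (R.δ A ⊗ₘ R.δ A) ≫ ((a ⊗ₘ c) ⊗ₘ (b ⊗ₘ d)) ≫ (R.μ B ⊗ₘ R.μ B) := by
        rw [delta4]; simp [Category.assoc]
    _ = R.δ A ≫ (conv R a c ⊗ₘ conv R b d) := by
        unfold conv
        rw [tensorHom_comp_tensorHom, tensorHom_comp_tensorHom]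

lemma sum_comp_asmc {ι : Type*} (s : Finset ι) {X Y Z : C} (f : ι → (X ⟶ Y)) (g : Y ⟶ Z) :
    (∑ i ∈ s, f i) ≫ g = ∑ i ∈ s, f i ≫ g := by
  classical
  induction s using Finset.induction_on with
  | empty => simp [ASMC.zero_comp]
  | insert _ _ h ih => rw [Finset.sum_insert h, Finset.sum_insert h, ASMC.add_comp, ih]

lemma comp_sum_asmc {ι : Type*} (s : Finset ι) {X Y Z : C} (f : X ⟶ Y) (g : ι → (Y ⟶ Z)) :
    f ≫ (∑ i ∈ s, g i) = ∑ i ∈ s, f ≫ g i := by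
  classical
  induction s using Finset.induction_on with
  | empty => simp [ASMC.comp_zero]
  | insert _ _ h ih => rw [Finset.sum_insert h, Finset.sum_insert h, ASMC.comp_add, ih]

lemma tensor_sum_asmc {ι : Type*} (s : Finset ι) {X Y Z W : C} (f : X ⟶ Y) (g : ι → (Z ⟶ W)) :
    f ⊗ₘ (∑ i ∈ s, g i) = ∑ i ∈ s, f ⊗ₘ g i := by
  classical
  induction s using Finset.induction_on with
  | empty => simp [ASMC.tensorHom_zero]
  | insert _ _ h ih => rw [Finset.sum_insert h, Finset.sum_insert h, ASMC.tensorHom_add, ih]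

lemma selH_cons {A B : C} (f : A ⟶ B) (t : List (A ⟶ B)) (p : Fin (t.length + 1) → Fin 2)
    (i : Fin 2) :
    selH (f :: t) p i
      = (if p 0 = i then [f] else []) ++ selH t (fun j => p j.succ) i := by
  unfold selH
  rw [show List.finRange (f :: t).length
        = (0 : Fin (t.length + 1)) :: (List.finRange t.length).map Fin.succ
      from List.finRange_succ (n := t.length)]
  rw [List.filter_cons, List.filter_map]
  have e2 : ((f :: t).get ∘ Fin.succ) = t.get := by
    funext j; simp
  by_cases h : p 0 = i
  · simp [h]; rw [← e2]; rfl
  · simp [h]; rw [← e2]; rfl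

end Aux3


/-- in a resource category, for any bag `f` of pointed morphisms
`A ⟶ B`, `δ_B ∘ Πf` equals the sum over all splittings `f = f₁ * f₂` (2-partitionings
of an enumeration of `f`) of `(Πf₁ ⊗ₘ Πf₂) ∘ δ_A`. -/
theorem comul_comp_prod {C : Type u} [Category.{v} C] [MonoidalCategory C]
    [SymmetricCategory C] [ASMC C] (R : ResourceStruct C) {A B : C}
    (l : List (A ⟶ B)) (hl : ∀ f ∈ l, IsPointedHom R f) :
    prodL R.toBialgStruct l ≫ R.δ B =
      ∑ p : Fin l.length → Fin 2,
        R.δ A ≫ (prodL R.toBialgStruct (selH l p 0) ⊗ₘ prodL R.toBialgStruct (selH l p 1)) := by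
  induction l with
  | nil =>
      simp only [List.length_nil]
      rw [Fintype.sum_unique]
      exact one_comp_delta R.toBialgStruct A B
  | cons f t ih =>
      have hf := hl f List.mem_cons_self
      have ih' := ih (fun g hg => hl g (List.mem_cons_of_mem f hg))
      have key0 : ∀ q : Fin t.length → Fin 2,
          R.δ A ≫ (prodL R.toBialgStruct (selH (f::t) (Fin.cons 0 q) 0)
            ⊗ₘ prodL R.toBialgStruct (selH (f::t) (Fin.cons 0 q) 1))
          = R.δ A ≫ (conv R.toBialgStruct f (prodL R.toBialgStruct (selH t q 0))
            ⊗ₘ prodL R.toBialgStruct (selH t q 1)) := by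
        intro q
        rw [selH_cons, selH_cons]
        simp [Fin.cons_zero, Fin.cons_succ, prodL]
      have key1 : ∀ q : Fin t.length → Fin 2,
          R.δ A ≫ (prodL R.toBialgStruct (selH (f::t) (Fin.cons 1 q) 0)
            ⊗ₘ prodL R.toBialgStruct (selH (f::t) (Fin.cons 1 q) 1))
          = R.δ A ≫ (prodL R.toBialgStruct (selH t q 0)
            ⊗ₘ conv R.toBialgStruct f (prodL R.toBialgStruct (selH t q 1))) := by
        intro q
        rw [selH_cons, selH_cons]
        simp [Fin.cons_zero, Fin.cons_succ, prodL]
      have rhs_eq : (∑ p : Fin (f::t).length → Fin 2,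
            R.δ A ≫ (prodL R.toBialgStruct (selH (f::t) p 0) ⊗ₘ prodL R.toBialgStruct (selH (f::t) p 1)))
          = (∑ q : Fin t.length → Fin 2,
              R.δ A ≫ (conv R.toBialgStruct f (prodL R.toBialgStruct (selH t q 0))
                ⊗ₘ prodL R.toBialgStruct (selH t q 1)))
            + (∑ q : Fin t.length → Fin 2,
              R.δ A ≫ (prodL R.toBialgStruct (selH t q 0)
                ⊗ₘ conv R.toBialgStruct f (prodL R.toBialgStruct (selH t q 1)))) := by
        simp only [List.length_cons]
        rw [← Equiv.sum_comp (Fin.consEquiv (fun _ : Fin (t.length + 1) => Fin 2))]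
        rw [Fintype.sum_prod_type, Fin.sum_univ_two]
        congr 1
        · exact Finset.sum_congr rfl fun q _ => key0 q
        · exact Finset.sum_congr rfl fun q _ => key1 q
      rw [show prodL R.toBialgStruct (f::t) = conv R.toBialgStruct f (prodL R.toBialgStruct t) from rfl,
          conv_comp_delta R.toBialgStruct, pointed_comp_delta R f hf, ih',
          ASMC.add_tensorHom, tensor_sum_asmc, tensor_sum_asmc,
          ASMC.add_comp, ASMC.comp_add, sum_comp_asmc, sum_comp_asmc, comp_sum_asmc, comp_sum_asmc,
          rhs_eq]
      congr 1
      · apply Finset.sum_congr rfl; intro q _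
        have h := conv_term R.toBialgStruct f (convOne R.toBialgStruct A B)
          (prodL R.toBialgStruct (selH t q 0)) (prodL R.toBialgStruct (selH t q 1))
        rw [conv_one_left] at h
        exact h
      · apply Finset.sum_congr rfl; intro q _
        have h := conv_term R.toBialgStruct (convOne R.toBialgStruct A B) f
          (prodL R.toBialgStruct (selH t q 0)) (prodL R.toBialgStruct (selH t q 1))
        rw [conv_one_left] at h
        exact h
end

section
/- In a resource category, composing the pointed identity with a product of a bag of pointed morphisms picks out singletons: for any finite multiset f of pointed morphisms A → B, id•_B ∘ Πf equals v if f is the singleton [v], and equals 0 otherwise. -/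
open CategoryTheory MonoidalCategory

universe v u

variable (C : Type u) [Category.{v} C] [MonoidalCategory C] [SymmetricCategory C]

variable [ASMC C]

variable {C}

section Aux
variable {C : Type u} [Category.{v} C] [MonoidalCategory C] [SymmetricCategory C] [ASMC C]

lemma conv_convOne (R : BialgStruct C) {A B : C} (v : A ⟶ B) :
    conv R v (convOne R A B) = v := by
  unfold conv convOne
  have h1 : v ⊗ₘ (R.ε A ≫ R.η B) = (𝟙 A ⊗ₘ R.ε A) ≫ (v ⊗ₘ R.η B) := by
    rw [MonoidalCategory.tensorHom_comp_tensorHom, Category.id_comp]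
  have h2 : (v ⊗ₘ R.η B) = (v ⊗ₘ 𝟙 (𝟙_ C)) ≫ (𝟙 B ⊗ₘ R.η B) := by
    rw [MonoidalCategory.tensorHom_comp_tensorHom, Category.comp_id, Category.id_comp]
  rw [h1, h2, MonoidalCategory.id_tensorHom, MonoidalCategory.id_tensorHom,
    MonoidalCategory.tensorHom_id]
  slice_lhs 4 5 => rw [R.unit_r B]
  slice_lhs 1 2 => rw [R.counit_r A]
  rw [Category.assoc, MonoidalCategory.rightUnitor_naturality, ← Category.assoc,
    Iso.inv_hom_id, Category.id_comp]

lemma pointed_ε (R : ResourceStruct C) {A B : C} (f : A ⟶ B)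
    (hf : IsPointedHom R f) : f ≫ R.ε B = 0 := by
  calc f ≫ R.ε B = (f ≫ R.pid B) ≫ R.ε B := by rw [hf]
    _ = f ≫ (R.pid B ≫ R.ε B) := by rw [Category.assoc]
    _ = 0 := by rw [R.pid_ε, ASMC.comp_zero]

lemma conv_ε_zero (R : BialgStruct C) {A B : C} (f g : A ⟶ B)
    (hf : f ≫ R.ε B = 0) : conv R f g ≫ R.ε B = 0 := by
  unfold conv
  rw [Category.assoc, Category.assoc, R.μ_ε B, ← Category.assoc (f ⊗ₘ g),
    MonoidalCategory.tensorHom_comp_tensorHom, hf, ASMC.zero_tensorHom, ASMC.zero_comp,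
    ASMC.comp_zero]

lemma conv_pid_zero (R : ResourceStruct C) {A B : C} (f g : A ⟶ B)
    (hf : f ≫ R.ε B = 0) (hg : g ≫ R.ε B = 0) :
    conv R.toBialgStruct f g ≫ R.pid B = 0 := by
  unfold conv
  rw [Category.assoc, Category.assoc, R.μ_pid B, ASMC.comp_add, ASMC.comp_add]
  have h1 : (f ⊗ₘ g) ≫ (B ◁ R.ε B) = 0 := by
    rw [← MonoidalCategory.id_tensorHom, MonoidalCategory.tensorHom_comp_tensorHom, hg,
      ASMC.tensorHom_zero]
  have h2 : (f ⊗ₘ g) ≫ (R.ε B ▷ B) = 0 := by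
    rw [← MonoidalCategory.tensorHom_id, MonoidalCategory.tensorHom_comp_tensorHom, hf,
      ASMC.zero_tensorHom]
  rw [← Category.assoc (f ⊗ₘ g), ← Category.assoc (f ⊗ₘ g), h1, h2,
    ASMC.zero_comp, ASMC.zero_comp, ASMC.comp_zero, add_zero]

end Aux

/-- in a resource category, composing the pointed identity with the
product of a bag of pointed morphisms picks out singletons: `id•_B ∘ Πf = v` if
`f = [v]`, and `0` otherwise. -/
theorem pid_comp_prod {C : Type u} [Category.{v} C] [MonoidalCategory C]
    [SymmetricCategory C] [ASMC C] (R : ResourceStruct C) {A B : C}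
    (l : List (A ⟶ B)) (hl : ∀ f ∈ l, IsPointedHom R f) :
    (∀ v : A ⟶ B, l = [v] → prodL R.toBialgStruct l ≫ R.pid B = v) ∧
    ((∀ v : A ⟶ B, l ≠ [v]) → prodL R.toBialgStruct l ≫ R.pid B = 0) := by
  constructor
  · intro v hv
    subst hv
    have : prodL R.toBialgStruct [v] = v := conv_convOne R.toBialgStruct v
    rw [this]
    exact hl v (List.mem_singleton_self v)
  · intro h
    match l, hl, h with
    | [], _, _ =>
      show (R.ε A ≫ R.η B) ≫ R.pid B = 0
      rw [Category.assoc, R.η_pid, ASMC.comp_zero]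
    | [v], _, h => exact absurd rfl (h v)
    | f :: g :: rest, hl, _ =>
      show conv R.toBialgStruct f (conv R.toBialgStruct g (prodL R.toBialgStruct rest))
        ≫ R.pid B = 0
      apply conv_pid_zero
      · exact pointed_ε R f (hl f (by simp))
      · exact conv_ε_zero _ _ _ (pointed_ε R g (hl g (by simp)))
end
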